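/- Let 0 < r < 1, let β₀(z) := (1/π)∫₀^π e^{−z φ(cos θ)} dθ for a continuous strictly increasing φ : [−1,1] → [r,1] with φ(−1) = r, φ(1) = 1, and let W₀(τ) = (π − arccos(φ^{−1}(τ)))/π and V = ∫_r^1 τ²dW₀ − (∫_r^1 τ dW₀)². Then for all x, y ≥ 0: V·x·y·e^{−(x+y)} ≤ β₀(x+y) − β₀(x)·β₀(y) ≤ V·x·y·e^{−r(x+y)}. -/

import Mathlib

open MeasureTheory Set Filter

lemma exp_diff_bounds (r x σ τ : ℝ) (hx : 0 ≤ x) (hr : r ≤ σ) (h : σ ≤ τ) (h1 : τ ≤ 1) :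
    x * (τ - σ) * Real.exp (-x) ≤ Real.exp (-x*σ) - Real.exp (-x*τ) ∧
    Real.exp (-x*σ) - Real.exp (-x*τ) ≤ x * (τ - σ) * Real.exp (-x*r) := by
  have hderiv : ∀ u ∈ Set.uIcc σ τ, HasDerivAt (fun v => -Real.exp (-x*v))
      (x * Real.exp (-x*u)) u := by
    intro u _
    have h1 : HasDerivAt (fun v : ℝ => -x*v) (-x) u := by
      simpa using (hasDerivAt_id u).const_mul (-x)
    have := (h1.exp).neg
    exact this.congr_deriv (by ring)
  have hint : IntervalIntegrable (fun u => x * Real.exp (-x*u)) volume σ τ :=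
    (Continuous.intervalIntegrable (by continuity) σ τ)
  have key : Real.exp (-x*σ) - Real.exp (-x*τ) = ∫ u in σ..τ, x * Real.exp (-x*u) := by
    rw [intervalIntegral.integral_eq_sub_of_hasDerivAt hderiv hint]
    ring
  constructor
  · rw [key]
    have := intervalIntegral.integral_mono_on h
      (intervalIntegrable_const (c := x * Real.exp (-x))) hint
      (fun u hu => by
        have h1u : u ≤ 1 := hu.2.trans h1
        have : -x ≤ -x*u := by nlinarith
        exact mul_le_mul_of_nonneg_left (Real.exp_le_exp.2 this) hx)
    simpa [smul_eq_mul, mul_comm, mul_assoc, mul_left_comm] using this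
  · rw [key]
    have := intervalIntegral.integral_mono_on h hint
      (intervalIntegrable_const (c := x * Real.exp (-x*r)))
      (fun u hu => by
        have hru : r ≤ u := hr.trans hu.1
        have : -x*u ≤ -x*r := by nlinarith
        exact mul_le_mul_of_nonneg_left (Real.exp_le_exp.2 this) hx)
    simpa [smul_eq_mul, mul_comm, mul_assoc, mul_left_comm] using this
lemma prod_bounds_le (r x y σ τ : ℝ) (hx : 0 ≤ x) (hy : 0 ≤ y)
    (hσ : σ ∈ Set.Icc r 1) (hτ : τ ∈ Set.Icc r 1) (hστ : σ ≤ τ) :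
    x*y*Real.exp (-(x+y)) * (σ - τ)^2 ≤
      (Real.exp (-x*σ) - Real.exp (-x*τ)) * (Real.exp (-y*σ) - Real.exp (-y*τ)) ∧
    (Real.exp (-x*σ) - Real.exp (-x*τ)) * (Real.exp (-y*σ) - Real.exp (-y*τ)) ≤
      x*y*Real.exp (-r*(x+y)) * (σ - τ)^2 := by
  obtain ⟨hx1, hx2⟩ := exp_diff_bounds r x σ τ hx hσ.1 hστ hτ.2
  obtain ⟨hy1, hy2⟩ := exp_diff_bounds r y σ τ hy hσ.1 hστ hτ.2
  have hτσ : 0 ≤ τ - σ := by linarith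
  have hxL : 0 ≤ x * (τ - σ) * Real.exp (-x) := by positivity
  have hyL : 0 ≤ y * (τ - σ) * Real.exp (-y) := by positivity
  have ha : 0 ≤ Real.exp (-x*σ) - Real.exp (-x*τ) := le_trans hxL hx1
  have hb : 0 ≤ Real.exp (-y*σ) - Real.exp (-y*τ) := le_trans hyL hy1
  have hxU : 0 ≤ x * (τ - σ) * Real.exp (-x*r) := by positivity
  constructor
  · have hE : Real.exp (-(x+y)) = Real.exp (-x) * Real.exp (-y) := by
      rw [← Real.exp_add]; ring_nf
    have := mul_le_mul hx1 hy1 hyL ha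
    have heq : x*y*(Real.exp (-x)*Real.exp (-y))*(σ-τ)^2
        = x * (τ - σ) * Real.exp (-x) * (y * (τ - σ) * Real.exp (-y)) := by ring
    rw [hE, heq]; exact this
  · have hE : Real.exp (-r*(x+y)) = Real.exp (-x*r) * Real.exp (-y*r) := by
      rw [← Real.exp_add]; ring_nf
    have := mul_le_mul hx2 hy2 hb hxU
    have heq : x*y*(Real.exp (-x*r)*Real.exp (-y*r))*(σ-τ)^2
        = x * (τ - σ) * Real.exp (-x*r) * (y * (τ - σ) * Real.exp (-y*r)) := by ring
    rw [hE, heq]; exact this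

lemma prod_bounds (r x y σ τ : ℝ) (hx : 0 ≤ x) (hy : 0 ≤ y)
    (hσ : σ ∈ Set.Icc r 1) (hτ : τ ∈ Set.Icc r 1) :
    x*y*Real.exp (-(x+y)) * (σ - τ)^2 ≤
      (Real.exp (-x*σ) - Real.exp (-x*τ)) * (Real.exp (-y*σ) - Real.exp (-y*τ)) ∧
    (Real.exp (-x*σ) - Real.exp (-x*τ)) * (Real.exp (-y*σ) - Real.exp (-y*τ)) ≤
      x*y*Real.exp (-r*(x+y)) * (σ - τ)^2 := by
  rcases le_total σ τ with h | h
  · exact prod_bounds_le r x y σ τ hx hy hσ hτ h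
  · obtain ⟨h1, h2⟩ := prod_bounds_le r x y τ σ hx hy hτ hσ h
    constructor
    · nlinarith [h1]
    · nlinarith [h2]
lemma cov_bound (μ : Measure ℝ) [IsProbabilityMeasure μ] (s : Set ℝ)
    (hs : ∀ᵐ τ ∂μ, τ ∈ s) (F G : ℝ → ℝ) (c : ℝ)
    (hiF : Integrable F μ) (hiG : Integrable G μ)
    (hiFG : Integrable (fun τ => F τ * G τ) μ)
    (hi1 : Integrable (fun τ : ℝ => τ) μ) (hi2 : Integrable (fun τ : ℝ => τ^2) μ)
    (hpt : ∀ σ ∈ s, ∀ τ ∈ s, c * (σ - τ)^2 ≤ (F σ - F τ) * (G σ - G τ)) :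
    c * ((∫ τ, τ^2 ∂μ) - (∫ τ, τ ∂μ)^2) ≤
      (∫ τ, F τ * G τ ∂μ) - (∫ τ, F τ ∂μ) * (∫ τ, G τ ∂μ) := by
  set M1 := ∫ τ, τ ∂μ with hM1
  set M2 := ∫ τ, τ^2 ∂μ with hM2
  set A := ∫ τ, F τ ∂μ with hA
  set B := ∫ τ, G τ ∂μ with hB
  set C := ∫ τ, F τ * G τ ∂μ with hC
  have hmuniv : (μ Set.univ).toReal = 1 := by simp
  have hiQ : ∀ a b d : ℝ, Integrable (fun τ : ℝ => a * τ^2 + b * τ + d) μ := by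
    intro a b d
    have h12 : Integrable (fun τ : ℝ => a * τ^2 + b * τ) μ :=
      (hi2.const_mul a).add (hi1.const_mul b)
    exact h12.add (integrable_const d)
  have hintQ : ∀ a b d : ℝ, ∫ τ, (a * τ^2 + b * τ + d) ∂μ = a * M2 + b * M1 + d := by
    intro a b d
    have h12 : Integrable (fun τ : ℝ => a * τ^2 + b * τ) μ :=
      (hi2.const_mul a).add (hi1.const_mul b)
    rw [integral_add h12 (integrable_const d),
      integral_add (hi2.const_mul a) (hi1.const_mul b),
      integral_const_mul, integral_const_mul, integral_const, probReal_univ]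
    simp [smul_eq_mul, hM1, hM2]
  have hiR : ∀ a b d : ℝ, Integrable (fun τ : ℝ => a * F τ + b * G τ + d * (F τ * G τ)) μ := by
    intro a b d
    have h12 : Integrable (fun τ : ℝ => a * F τ + b * G τ) μ :=
      (hiF.const_mul a).add (hiG.const_mul b)
    exact h12.add (hiFG.const_mul d)
  have hintR : ∀ a b d : ℝ, ∫ τ, (a * F τ + b * G τ + d * (F τ * G τ)) ∂μ
      = a * A + b * B + d * C := by
    intro a b d
    have h12 : Integrable (fun τ : ℝ => a * F τ + b * G τ) μ :=
      (hiF.const_mul a).add (hiG.const_mul b)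
    rw [integral_add h12 (hiFG.const_mul d),
      integral_add (hiF.const_mul a) (hiG.const_mul b),
      integral_const_mul, integral_const_mul, integral_const_mul]
  have hinner1 : ∀ σ : ℝ, ∫ τ, c * (σ - τ)^2 ∂μ = c * (M2 - 2*σ*M1 + σ^2) := by
    intro σ
    have he : (fun τ : ℝ => c * (σ - τ)^2) = fun τ => c * τ^2 + (-2*c*σ) * τ + c*σ^2 := by
      funext τ; ring
    rw [he, hintQ]; ring
  have hinner2 : ∀ σ : ℝ, ∫ τ, (F σ - F τ) * (G σ - G τ) ∂μ
      = (-G σ) * A + (-F σ) * B + 1 * C + F σ * G σ := by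
    intro σ
    have he : (fun τ : ℝ => (F σ - F τ) * (G σ - G τ))
        = fun τ => ((-G σ) * F τ + (-F σ) * G τ + 1 * (F τ * G τ)) + F σ * G σ := by
      funext τ; ring
    rw [he, integral_add (hiR _ _ _) (integrable_const _), hintR, integral_const, probReal_univ]
    simp [smul_eq_mul]
  have hstep : ∀ᵐ σ ∂μ, c * (M2 - 2*σ*M1 + σ^2)
      ≤ (-G σ) * A + (-F σ) * B + 1 * C + F σ * G σ := by
    filter_upwards [hs] with σ hσ
    rw [← hinner1 σ, ← hinner2 σ]
    refine integral_mono_ae ?_ ?_ ?_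
    · have : Integrable (fun τ : ℝ => c * τ^2 + (-2*c*σ) * τ + c*σ^2) μ := hiQ _ _ _
      exact this.congr (by filter_upwards with τ; ring)
    · have : Integrable (fun τ : ℝ => ((-G σ) * F τ + (-F σ) * G τ + 1 * (F τ * G τ))
          + F σ * G σ) μ := (hiR _ _ _).add (integrable_const _)
      exact this.congr (by filter_upwards with τ; ring)
    · filter_upwards [hs] with τ hτ
      exact hpt σ hσ τ hτ
  have hiL : Integrable (fun σ : ℝ => c * (M2 - 2*σ*M1 + σ^2)) μ :=
    (hiQ c (-2*c*M1) (c*M2)).congr (by filter_upwards with σ; ring)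
  have hiRR : Integrable (fun σ : ℝ => (-G σ) * A + (-F σ) * B + 1 * C + F σ * G σ) μ := by
    have h1 : Integrable (fun σ : ℝ => (-B) * F σ + (-A) * G σ + 1 * (F σ * G σ)) μ :=
      hiR _ _ _
    have h2 : Integrable (fun σ : ℝ => ((-B) * F σ + (-A) * G σ + 1 * (F σ * G σ)) + C) μ :=
      h1.add (integrable_const C)
    exact h2.congr (by filter_upwards with σ; ring)
  have houter := integral_mono_ae hiL hiRR hstep
  have hL : ∫ σ, c * (M2 - 2*σ*M1 + σ^2) ∂μ = c * (2*M2 - 2*M1^2) := by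
    have he : (fun σ : ℝ => c * (M2 - 2*σ*M1 + σ^2))
        = fun σ => c * σ^2 + (-2*c*M1) * σ + c*M2 := by funext σ; ring
    rw [he, hintQ]; ring
  have hR : ∫ σ, ((-G σ) * A + (-F σ) * B + 1 * C + F σ * G σ) ∂μ
      = 2*C - 2*A*B := by
    have he : (fun σ : ℝ => (-G σ) * A + (-F σ) * B + 1 * C + F σ * G σ)
        = fun σ => ((-B) * F σ + (-A) * G σ + 1 * (F σ * G σ)) + C := by
      funext σ; ring
    rw [he, integral_add (hiR _ _ _) (integrable_const _), hintR, integral_const, probReal_univ]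
    simp only [smul_eq_mul, one_mul]; ring
  rw [hL, hR] at houter
  nlinarith [houter]
lemma meas_eq (r : ℝ) (hr0 : 0 < r) (hr1 : r < 1) (φ ψ : ℝ → ℝ)
    (hφc : ContinuousOn φ (Set.Icc (-1) 1))
    (hφm : StrictMonoOn φ (Set.Icc (-1) 1))
    (hφm1 : φ (-1) = r) (hφ1 : φ 1 = 1)
    (hψmem : ∀ τ ∈ Set.Icc r 1, ψ τ ∈ Set.Icc (-1:ℝ) 1)
    (hψφ : ∀ τ ∈ Set.Icc r 1, φ (ψ τ) = τ)
    (w : StieltjesFunction ℝ)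
    (hw : ∀ τ ∈ Set.Icc r 1, w τ = (Real.pi - Real.arccos (ψ τ)) / Real.pi)
    (hw0 : ∀ τ ≤ r, w τ = 0) (hw1 : ∀ τ : ℝ, 1 ≤ τ → w τ = 1) :
    w.measure = Measure.map (fun θ => φ (Real.cos θ))
      ((ENNReal.ofReal Real.pi)⁻¹ • volume.restrict (Icc 0 Real.pi)) := by
  have hπ : (0:ℝ) < Real.pi := Real.pi_pos
  have htb : Tendsto w atBot (nhds 0) := by
    refine Tendsto.congr' ?_ tendsto_const_nhds
    filter_upwards [eventually_le_atBot r] with t ht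
    exact (hw0 t ht).symm
  have hmemcos : ∀ θ : ℝ, φ (Real.cos θ) ∈ Set.Icc r 1 := by
    intro θ
    have h1 : Real.cos θ ∈ Set.Icc (-1:ℝ) 1 := ⟨Real.neg_one_le_cos θ, Real.cos_le_one θ⟩
    constructor
    · rw [← hφm1]
      exact hφm.monotoneOn (Set.left_mem_Icc.2 (by norm_num)) h1 h1.1
    · rw [← hφ1]
      exact hφm.monotoneOn h1 (Set.right_mem_Icc.2 (by norm_num)) h1.2
  have hcont : ContinuousOn (fun θ => φ (Real.cos θ)) (Icc 0 Real.pi) := by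
    exact hφc.comp Real.continuous_cos.continuousOn
      (fun θ _ => ⟨Real.neg_one_le_cos θ, Real.cos_le_one θ⟩)
  have hmeas : AEMeasurable (fun θ => φ (Real.cos θ))
      ((ENNReal.ofReal Real.pi)⁻¹ • volume.restrict (Icc 0 Real.pi)) := by
    exact (hcont.aemeasurable measurableSet_Icc).smul_measure _
  have htt : Tendsto w atTop (nhds 1) := by
    refine Tendsto.congr' ?_ tendsto_const_nhds
    filter_upwards [eventually_ge_atTop 1] with t ht
    exact (hw1 t ht).symm
  haveI : IsFiniteMeasure w.measure := w.isFiniteMeasure htb htt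
  refine Measure.ext_of_Iic w.measure _ (fun t => ?_)
  rw [w.measure_Iic htb t, Measure.map_apply_of_aemeasurable hmeas measurableSet_Iic,
    Measure.smul_apply, Measure.restrict_apply' measurableSet_Icc]
  simp only [smul_eq_mul, sub_zero]
  rcases lt_or_ge t r with htr | htr
  · have hempty : (fun θ => φ (Real.cos θ)) ⁻¹' (Iic t) ∩ Icc 0 Real.pi = ∅ := by
      ext θ
      simp only [Set.mem_inter_iff, Set.mem_preimage, Set.mem_Iic, Set.mem_empty_iff_false,
        iff_false, not_and]
      intro hle _
      exact absurd hle (by linarith [(hmemcos θ).1])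
    rw [hempty, hw0 t htr.le]
    simp
  rcases le_or_gt t 1 with ht1 | ht1
  · have htmem : t ∈ Set.Icc r 1 := ⟨htr, ht1⟩
    have hψt := hψmem t htmem
    have hset : (fun θ => φ (Real.cos θ)) ⁻¹' (Iic t) ∩ Icc 0 Real.pi
        = Icc (Real.arccos (ψ t)) Real.pi := by
      ext θ
      simp only [Set.mem_inter_iff, Set.mem_preimage, Set.mem_Iic, Set.mem_Icc]
      constructor
      · rintro ⟨hφle, hθ0, hθπ⟩
        have hcos : Real.cos θ ≤ ψ t := by
          have := (hφm.le_iff_le ⟨Real.neg_one_le_cos θ, Real.cos_le_one θ⟩ hψt).1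
          rw [hψφ t htmem] at this
          exact this hφle
        refine ⟨?_, hθπ⟩
        have hκ : Real.cos θ ≤ Real.cos (Real.arccos (ψ t)) := by
          rwa [Real.cos_arccos hψt.1 hψt.2]
        by_contra hlt
        push_neg at hlt
        have := Real.strictAntiOn_cos ⟨hθ0, hθπ⟩
          ⟨Real.arccos_nonneg _, Real.arccos_le_pi _⟩ hlt
        linarith
      · rintro ⟨ha, hθπ⟩
        have hθ0 : 0 ≤ θ := le_trans (Real.arccos_nonneg _) ha
        refine ⟨?_, hθ0, hθπ⟩
        have hcos : Real.cos θ ≤ ψ t := by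
          rw [← Real.cos_arccos hψt.1 hψt.2]
          rcases eq_or_lt_of_le ha with h | h
          · rw [h]
          · exact (Real.strictAntiOn_cos ⟨Real.arccos_nonneg _, Real.arccos_le_pi _⟩
              ⟨hθ0, hθπ⟩ h).le
        calc φ (Real.cos θ) ≤ φ (ψ t) :=
              hφm.monotoneOn ⟨Real.neg_one_le_cos θ, Real.cos_le_one θ⟩ hψt hcos
          _ = t := hψφ t htmem
    rw [hset, hw t htmem, Real.volume_Icc]
    rw [ENNReal.ofReal_div_of_pos hπ, div_eq_mul_inv, mul_comm]
  · have hfull : (fun θ => φ (Real.cos θ)) ⁻¹' (Iic t) ∩ Icc 0 Real.pi = Icc 0 Real.pi := by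
      apply Set.inter_eq_self_of_subset_right
      intro θ _
      exact Set.mem_Iic.2 (le_trans (hmemcos θ).2 ht1.le)
    rw [hfull, hw1 t ht1.le, Real.volume_Icc]
    rw [ENNReal.ofReal_one, sub_zero]
    rw [ENNReal.inv_mul_cancel (by simp [hπ]) (by simp)]

theorem stmt_17 (r : ℝ) (hr0 : 0 < r) (hr1 : r < 1) (φ ψ : ℝ → ℝ)
    (hφc : ContinuousOn φ (Set.Icc (-1) 1)) (hφm : StrictMonoOn φ (Set.Icc (-1) 1))
    (hφm1 : φ (-1) = r) (hφ1 : φ 1 = 1)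
    (hψmem : ∀ τ ∈ Set.Icc r 1, ψ τ ∈ Set.Icc (-1:ℝ) 1)
    (hψφ : ∀ τ ∈ Set.Icc r 1, φ (ψ τ) = τ)
    (w : StieltjesFunction ℝ)
    (hw : ∀ τ ∈ Set.Icc r 1, w τ = (Real.pi - Real.arccos (ψ τ)) / Real.pi)
    (hw0 : ∀ τ ≤ r, w τ = 0) (hw1 : ∀ τ : ℝ, 1 ≤ τ → w τ = 1) :
    ∀ x y : ℝ, 0 ≤ x → 0 ≤ y →
      let β := fun s : ℝ =>
        (1 / Real.pi) * ∫ θ in (0:ℝ)..Real.pi, Real.exp (-s * φ (Real.cos θ))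
      let V := (∫ τ in Set.Icc r 1, τ ^ 2 ∂w.measure) -
        (∫ τ in Set.Icc r 1, τ ∂w.measure) ^ 2
      V * x * y * Real.exp (-(x + y)) ≤ β (x + y) - β x * β y ∧
      β (x + y) - β x * β y ≤ V * x * y * Real.exp (-r * (x + y)) := by
  intro x y hx hy β V
  have hbdef : β = fun s : ℝ =>
      (1 / Real.pi) * ∫ θ in (0:ℝ)..Real.pi, Real.exp (-s * φ (Real.cos θ)) := rfl
  have hVdef : V = (∫ τ in Set.Icc r 1, τ ^ 2 ∂w.measure) -
      (∫ τ in Set.Icc r 1, τ ∂w.measure) ^ 2 := rfl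
  clear_value β V
  have hπ : (0:ℝ) < Real.pi := Real.pi_pos
  set μ := w.measure with hμ
  -- basic limits of w
  have htb : Tendsto w atBot (nhds 0) := by
    refine Tendsto.congr' ?_ tendsto_const_nhds
    filter_upwards [eventually_le_atBot r] with t ht
    exact (hw0 t ht).symm
  have htt : Tendsto w atTop (nhds 1) := by
    refine Tendsto.congr' ?_ tendsto_const_nhds
    filter_upwards [eventually_ge_atTop 1] with t ht
    exact (hw1 t ht).symm
  haveI : IsProbabilityMeasure μ := by
    constructor
    rw [hμ, w.measure_univ htb htt]
    norm_num
  -- the pushforward identification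
  have hmap := meas_eq r hr0 hr1 φ ψ hφc hφm hφm1 hφ1 hψmem hψφ w hw hw0 hw1
  have hmemcos : ∀ θ : ℝ, φ (Real.cos θ) ∈ Set.Icc r 1 := by
    intro θ
    have h1 : Real.cos θ ∈ Set.Icc (-1:ℝ) 1 := ⟨Real.neg_one_le_cos θ, Real.cos_le_one θ⟩
    constructor
    · rw [← hφm1]
      exact hφm.monotoneOn (Set.left_mem_Icc.2 (by norm_num)) h1 h1.1
    · rw [← hφ1]
      exact hφm.monotoneOn h1 (Set.right_mem_Icc.2 (by norm_num)) h1.2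
  have hcont : ContinuousOn (fun θ => φ (Real.cos θ)) (Icc 0 Real.pi) :=
    hφc.comp Real.continuous_cos.continuousOn
      (fun θ _ => ⟨Real.neg_one_le_cos θ, Real.cos_le_one θ⟩)
  have hmeas : AEMeasurable (fun θ => φ (Real.cos θ))
      ((ENNReal.ofReal Real.pi)⁻¹ • volume.restrict (Icc 0 Real.pi)) :=
    (hcont.aemeasurable measurableSet_Icc).smul_measure _
  -- support
  have hsupp : μ (Set.Icc r 1)ᶜ = 0 := by
    rw [hμ, hmap, Measure.map_apply_of_aemeasurable hmeas measurableSet_Icc.compl,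
      Measure.smul_apply, Measure.restrict_apply' measurableSet_Icc]
    have : (fun θ => φ (Real.cos θ)) ⁻¹' (Set.Icc r 1)ᶜ ∩ Icc 0 Real.pi = ∅ := by
      ext θ
      simp only [Set.mem_inter_iff, Set.mem_preimage, Set.mem_compl_iff,
        Set.mem_empty_iff_false, iff_false, not_and]
      exact fun h _ => h (hmemcos θ)
    rw [this]
    simp
  have hae : ∀ᵐ τ ∂μ, τ ∈ Set.Icc r 1 := by
    rw [MeasureTheory.ae_iff]
    exact hsupp
  have hrestr : μ.restrict (Set.Icc r 1) = μ :=
    Measure.restrict_eq_self_of_ae_mem hae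
  -- β as an integral against μ
  have hβint : ∀ s : ℝ, β s = ∫ τ, Real.exp (-s * τ) ∂μ := by
    intro s
    have hsm : AEStronglyMeasurable (fun τ : ℝ => Real.exp (-s * τ))
        (Measure.map (fun θ => φ (Real.cos θ))
          ((ENNReal.ofReal Real.pi)⁻¹ • volume.restrict (Icc 0 Real.pi))) :=
      (Real.continuous_exp.comp (continuous_const.mul continuous_id)).aestronglyMeasurable
    rw [hbdef, hμ, hmap, integral_map hmeas hsm, integral_smul_measure,
      MeasureTheory.integral_Icc_eq_integral_Ioc,
      ← intervalIntegral.integral_of_le Real.pi_pos.le]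
    have : ((ENNReal.ofReal Real.pi)⁻¹).toReal = 1 / Real.pi := by
      rw [ENNReal.toReal_inv, ENNReal.toReal_ofReal hπ.le, one_div]
    rw [this, smul_eq_mul]
  -- integrability of continuous functions
  have hInt : ∀ f : ℝ → ℝ, Continuous f → Integrable f μ := by
    intro f hf
    rw [← hrestr]
    exact ContinuousOn.integrableOn_compact isCompact_Icc hf.continuousOn
  set F := fun τ : ℝ => Real.exp (-x * τ) with hF
  set G := fun τ : ℝ => Real.exp (-y * τ) with hG
  have hcF : Continuous F := Real.continuous_exp.comp (continuous_const.mul continuous_id)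
  have hcG : Continuous G := Real.continuous_exp.comp (continuous_const.mul continuous_id)
  have hiF : Integrable F μ := hInt F hcF
  have hiG : Integrable G μ := hInt G hcG
  have hiFG : Integrable (fun τ => F τ * G τ) μ := hInt _ (hcF.mul hcG)
  have hi1 : Integrable (fun τ : ℝ => τ) μ := hInt _ continuous_id
  have hi2 : Integrable (fun τ : ℝ => τ^2) μ := hInt _ (continuous_pow 2)
  have hFG : (fun τ : ℝ => F τ * G τ) = fun τ : ℝ => Real.exp (-(x+y) * τ) := by
    funext τ
    rw [hF, hG, ← Real.exp_add]
    ring_nf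
  -- identify the β values
  have hβx : β x = ∫ τ, F τ ∂μ := hβint x
  have hβy : β y = ∫ τ, G τ ∂μ := hβint y
  have hβxy : β (x+y) = ∫ τ, F τ * G τ ∂μ := by rw [hβint (x+y), hFG]
  -- identify V
  have hVeq : V = (∫ τ, τ^2 ∂μ) - (∫ τ, τ ∂μ)^2 := by
    rw [hVdef, hrestr]
  constructor
  · have hcov := cov_bound μ (Set.Icc r 1) hae F G (x*y*Real.exp (-(x+y)))
      hiF hiG hiFG hi1 hi2
      (fun σ hσ τ hτ => by
        have := (prod_bounds r x y σ τ hx hy hσ hτ).1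
        calc x*y*Real.exp (-(x+y)) * (σ - τ)^2
            = x*y*Real.exp (-(x+y)) * (σ - τ)^2 := rfl
          _ ≤ _ := this)
    rw [hβxy, hβx, hβy, hVeq]
    nlinarith [hcov]
  · have hcov := cov_bound μ (Set.Icc r 1) hae (fun τ => -F τ) G
      (-(x*y*Real.exp (-r*(x+y))))
      hiF.neg hiG (by
        have : (fun τ : ℝ => (-F τ) * G τ) = fun τ => -(F τ * G τ) := by funext τ; ring
        rw [this]; exact hiFG.neg) hi1 hi2
      (fun σ hσ τ hτ => by
        have h2 := (prod_bounds r x y σ τ hx hy hσ hτ).2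
        simp only [hF, hG]
        nlinarith [h2])
    have e1 : ∫ τ, (-F τ) * G τ ∂μ = -∫ τ, F τ * G τ ∂μ := by
      have : (fun τ : ℝ => (-F τ) * G τ) = fun τ => -(F τ * G τ) := by funext τ; ring
      rw [this, integral_neg]
    have e2 : ∫ τ, (fun τ => -F τ) τ ∂μ = -∫ τ, F τ ∂μ := integral_neg _
    rw [e1, e2] at hcov
    rw [hβxy, hβx, hβy, hVeq]
    nlinarith [hcov]
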